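/- Let M be an mtt and t ∈ T_Δ a fixed output tree, with run, ρ, V defined from M and t as in the context. Then for every input tree s' ∈ T_Σ, every state q ∈ Q of rank n, and all parameter-free trees r_1,…,r_n over Δ ∪ (Q × T_Σ): ρ(⟦⟨q,s'⟩(r_1,…,r_n)⟧_IO) = { v' ∈ V | there exist v_1,…,v_n ∈ V with (q,(v_1,…,v_n),v') ∈ run(s') and v_i ∈ ρ(⟦r_i⟧_IO) for all i }. -/

import Mathlib

namespace MttF

/-- Finite ordered trees over a label type `α`. -/
inductive RTree (α : Type) : Type
  | node : α → List (RTree α) → RTree α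

namespace RTree

variable {α β : Type}

/-- The root label of a tree. -/
def label : RTree α → α
  | node a _ => a

/-- The list of immediate subtrees of a tree. -/
def children : RTree α → List (RTree α)
  | node _ ts => ts

/-- Relabelling of trees. -/
def map (f : α → β) : RTree α → RTree β
  | node a ts => node (f a) (ts.attach.map (fun x => map f x.1))
decreasing_by
  have := List.sizeOf_lt_of_mem x.2
  simp only [node.sizeOf_spec]
  omega

/-- A tree is well-formed with respect to a rank function if every node labeled
by a rank-`k` symbol has exactly `k` children. `T_Σ` is the set of well-formed
trees over `Σ`. -/
inductive Wf (rk : α → ℕ) : RTree α → Prop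
  | node {a : α} {ts : List (RTree α)} :
      ts.length = rk a → (∀ t ∈ ts, Wf rk t) → Wf rk (node a ts)

/-- `Subtree u t` holds iff `u` is a subtree of `t` (rooted at some node of `t`). -/
inductive Subtree : RTree α → RTree α → Prop
  | refl (t : RTree α) : Subtree t t
  | step {u c : RTree α} {a : α} {ts : List (RTree α)} :
      c ∈ ts → Subtree u c → Subtree u (node a ts)

end RTree

/-- Labels for output trees with parameters: trees over `Δ ∪ Y`. -/
inductive OLab (Δ : Type) : Type
  | out (d : Δ)
  | param (i : ℕ)

/-- Labels for right-hand sides of mtt rules: trees over `Δ ∪ (Q × X) ∪ Y`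
(the second component of a call is the index of the input variable `x`). -/
inductive RLab (Δ Q : Type) : Type
  | out (d : Δ)
  | call (q : Q) (x : ℕ)
  | param (i : ℕ)

/-- Labels for "semantic" trees over `Δ ∪ (Q × T_Σ) ∪ Y`. -/
inductive SLab (Γ Δ Q : Type) : Type
  | out (d : Δ)
  | call (q : Q) (s : RTree Γ)
  | param (i : ℕ)

/-- Trees over `Δ ∪ Y`. -/
abbrev OT (Δ : Type) := RTree (OLab Δ)
/-- Right-hand side trees over `Δ ∪ (Q × X) ∪ Y`. -/
abbrev Rhs (Δ Q : Type) := RTree (RLab Δ Q)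
/-- Trees over `Δ ∪ (Q × T_Σ) ∪ Y`. -/
abbrev ST (Γ Δ Q : Type) := RTree (SLab Γ Δ Q)

/-- First-order substitution `x_i := ss_i` on a label of a right-hand side
(indices are 0-based; for well-formed rules the index is always in range). -/
def RLab.subst {Γ Δ Q : Type} (ss : List (RTree Γ)) : RLab Δ Q → SLab Γ Δ Q
  | .out d => .out d
  | .param i => .param i
  | .call q x =>
    match ss[x]? with
    | some s => .call q s
    | none => .param x

/-- `r[x_1/s_1, …, x_k/s_k]`. -/
def substX {Γ Δ Q : Type} (ss : List (RTree Γ)) (r : Rhs Δ Q) : ST Γ Δ Q :=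
  r.map (RLab.subst ss)

/-- Second-order (parameter) substitution `t[y_1/ts_1, …, y_n/ts_n]`
(`y` indices are 0-based). -/
def substY {Δ : Type} (ts : List (OT Δ)) : OT Δ → OT Δ
  | .node (.param i) _ => ts.getD i (.node (.param i) [])
  | .node (.out d) us => .node (.out d) (us.attach.map (fun x => substY ts x.1))
decreasing_by
  have := List.sizeOf_lt_of_mem x.2
  simp only [RTree.node.sizeOf_spec]
  omega

/-- The embedding of `T_Δ` into the trees over `Δ ∪ Y`. -/
def embed {Δ : Type} (t : RTree Δ) : OT Δ := t.map OLab.out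

variable {Γ Δ Q : Type}

/-- IO (call-by-value, inside-out) semantics: `SemIO rsel u t` holds iff
`t ∈ ⟦u⟧_IO`.  The rules of the transducer are given by a selector
`rsel q σ ss`: the set of right-hand sides of the `⟨q,σ⟩`-rules that are
applicable when the children of the current input node are `ss` (for a plain
mtt this does not depend on `ss`, cf. `plainSel`). -/
inductive SemIO (rsel : Q → Γ → List (RTree Γ) → Set (Rhs Δ Q)) :
    ST Γ Δ Q → OT Δ → Prop
  | param (i : ℕ) :
      SemIO rsel (.node (.param i) []) (.node (.param i) [])
  | out {d : Δ} {us : List (ST Γ Δ Q)} {ts : List (OT Δ)}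
      (hlen : ts.length = us.length)
      (h : ∀ i : Fin us.length, SemIO rsel (us.get i) (ts.get (i.cast hlen.symm))) :
      SemIO rsel (.node (.out d) us) (.node (.out d) ts)
  | call {q : Q} {σ : Γ} {ss : List (RTree Γ)} {us : List (ST Γ Δ Q)}
      {r : Rhs Δ Q} {t₀ : OT Δ} {ts : List (OT Δ)}
      (hr : r ∈ rsel q σ ss)
      (h₀ : SemIO rsel (substX ss r) t₀)
      (hlen : ts.length = us.length)
      (h : ∀ i : Fin us.length, SemIO rsel (us.get i) (ts.get (i.cast hlen.symm))) :
      SemIO rsel (.node (.call q (.node σ ss)) us) (substY ts t₀)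

mutual
/-- OI (call-by-name, outside-in) semantics: `SemOI rsel u t` holds iff
`t ∈ ⟦u⟧_OI`. -/
inductive SemOI (rsel : Q → Γ → List (RTree Γ) → Set (Rhs Δ Q)) :
    ST Γ Δ Q → OT Δ → Prop
  | param (i : ℕ) :
      SemOI rsel (.node (.param i) []) (.node (.param i) [])
  | out {d : Δ} {us : List (ST Γ Δ Q)} {ts : List (OT Δ)}
      (hlen : ts.length = us.length)
      (h : ∀ i : Fin us.length, SemOI rsel (us.get i) (ts.get (i.cast hlen.symm))) :
      SemOI rsel (.node (.out d) us) (.node (.out d) ts)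
  | call {q : Q} {σ : Γ} {ss : List (RTree Γ)} {us : List (ST Γ Δ Q)}
      {r : Rhs Δ Q} {t₀ : OT Δ} {t : OT Δ}
      (hr : r ∈ rsel q σ ss)
      (h₀ : SemOI rsel (substX ss r) t₀)
      (hs : OISub rsel us t₀ t) :
      SemOI rsel (.node (.call q (.node σ ss)) us) t

/-- OI-substitution: `OISub rsel us t₀ t` holds iff `t ∈ (t₀ ←_OI (⟦us_1⟧_OI, …, ⟦us_n⟧_OI))`,
i.e. `t` is obtained from `t₀` by independently replacing every occurrence of a parameter
`y_i` by some member of `⟦us_i⟧_OI`. -/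
inductive OISub (rsel : Q → Γ → List (RTree Γ) → Set (Rhs Δ Q)) :
    List (ST Γ Δ Q) → OT Δ → OT Δ → Prop
  | param {us : List (ST Γ Δ Q)} {i : ℕ} {t : OT Δ}
      (h : i < us.length) (hsem : SemOI rsel (us.get ⟨i, h⟩) t) :
      OISub rsel us (.node (.param i) []) t
  | out {us : List (ST Γ Δ Q)} {d : Δ} {ts ts' : List (OT Δ)}
      (hlen : ts'.length = ts.length)
      (h : ∀ i : Fin ts.length, OISub rsel us (ts.get i) (ts'.get (i.cast hlen.symm))) :
      OISub rsel us (.node (.out d) ts) (.node (.out d) ts')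
end

/-- The rule selector of a plain mtt: the applicable rules do not depend on the
child subtrees of the current input node. -/
def plainSel (rules : Q → Γ → Set (Rhs Δ Q)) :
    Q → Γ → List (RTree Γ) → Set (Rhs Δ Q) :=
  fun q σ _ => rules q σ

/-- The translation `τ_{IO,M} ⊆ T_Σ × T_Δ` realized in IO mode. -/
def tauIO (rankΓ : Γ → ℕ) (rankΔ : Δ → ℕ)
    (rsel : Q → Γ → List (RTree Γ) → Set (Rhs Δ Q)) (q₀ : Q) :
    Set (RTree Γ × RTree Δ) :=
  {p | p.1.Wf rankΓ ∧ p.2.Wf rankΔ ∧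
       SemIO rsel (.node (.call q₀ p.1) []) (embed p.2)}

/-- The translation `τ_{OI,M} ⊆ T_Σ × T_Δ` realized in OI mode. -/
def tauOI (rankΓ : Γ → ℕ) (rankΔ : Δ → ℕ)
    (rsel : Q → Γ → List (RTree Γ) → Set (Rhs Δ Q)) (q₀ : Q) :
    Set (RTree Γ × RTree Δ) :=
  {p | p.1.Wf rankΓ ∧ p.2.Wf rankΔ ∧
       SemOI rsel (.node (.call q₀ p.1) []) (embed p.2)}

/-- Well-formedness of a right-hand side of a rule of an mtt whose current
input symbol has rank `k` and whose current state has rank `m`: output symbols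
have the correct number of children, state calls `⟨q', x_i⟩` have `rank q'`
children and `i < k`, and parameters `y_j` satisfy `j < m`. -/
inductive RhsWf (rankΔ : Δ → ℕ) (rankQ : Q → ℕ) (k m : ℕ) : Rhs Δ Q → Prop
  | out {d : Δ} {ts : List (Rhs Δ Q)}
      (hlen : ts.length = rankΔ d) (h : ∀ t ∈ ts, RhsWf rankΔ rankQ k m t) :
      RhsWf rankΔ rankQ k m (.node (.out d) ts)
  | call {q : Q} {x : ℕ} {ts : List (Rhs Δ Q)}
      (hx : x < k) (hlen : ts.length = rankQ q)
      (h : ∀ t ∈ ts, RhsWf rankΔ rankQ k m t) :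
      RhsWf rankΔ rankQ k m (.node (.call q x) ts)
  | param {i : ℕ} (hi : i < m) : RhsWf rankΔ rankQ k m (.node (.param i) [])

/-- Well-formedness of a tree over `Δ ∪ (Q × T_Σ) ∪ Y`. -/
inductive STWf (rankΓ : Γ → ℕ) (rankΔ : Δ → ℕ) (rankQ : Q → ℕ) : ST Γ Δ Q → Prop
  | out {d : Δ} {ts : List (ST Γ Δ Q)}
      (hlen : ts.length = rankΔ d) (h : ∀ t ∈ ts, STWf rankΓ rankΔ rankQ t) :
      STWf rankΓ rankΔ rankQ (.node (.out d) ts)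
  | call {q : Q} {s : RTree Γ} {ts : List (ST Γ Δ Q)}
      (hs : s.Wf rankΓ) (hlen : ts.length = rankQ q)
      (h : ∀ t ∈ ts, STWf rankΓ rankΔ rankQ t) :
      STWf rankΓ rankΔ rankQ (.node (.call q s) ts)
  | param (i : ℕ) : STWf rankΓ rankΔ rankQ (.node (.param i) [])

/-- A tree over `Δ ∪ (Q × T_Σ) ∪ Y` is parameter-free if no `y_i` occurs in it. -/
inductive NoParam : ST Γ Δ Q → Prop
  | node {l : SLab Γ Δ Q} {ts : List (ST Γ Δ Q)}
      (hl : ∀ i : ℕ, l ≠ .param i) (h : ∀ t ∈ ts, NoParam t) :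
      NoParam (.node l ts)

/-- A macro tree transducer `M = (Q, Σ, Δ, q₀, R)`.  The alphabets `Γ` (input),
`Δ` (output) and the set `Q` of states are ranked; `q₀` has rank `0`; `rules q σ`
is the (finite) set `R_{q,σ}` of right-hand sides of the `⟨q,σ⟩`-rules, and every
right-hand side is a well-formed tree over `Δ ∪ (Q × X_k) ∪ Y_m`. -/
structure MTT (Γ Δ Q : Type) where
  rankΓ : Γ → ℕ
  rankΔ : Δ → ℕ
  rankQ : Q → ℕ
  q₀ : Q
  q₀_rank : rankQ q₀ = 0
  rules : Q → Γ → Set (Rhs Δ Q)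
  rules_fin : ∀ q σ, (rules q σ).Finite
  rules_wf : ∀ q σ, ∀ r ∈ rules q σ, RhsWf rankΔ rankQ (rankΓ σ) (rankQ q) r

/-- The rule selector of a plain mtt. -/
def MTT.sel (M : MTT Γ Δ Q) : Q → Γ → List (RTree Γ) → Set (Rhs Δ Q) :=
  plainSel M.rules

end MttF
namespace MttF

/-- The set `V = V_t ∪ {⊥}`: `some w` stands for the subtree `w` of the fixed
output tree `t`, and `none` stands for `⊥`. -/
abbrev V (Δ : Type) := Option (RTree Δ)

/-- Triples `(q, v⃗, v') ∈ ⋃_i Q^{(i)} × V^i × V`. -/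
abbrev Trip (Δ Q : Type) := Q × List (V Δ) × V Δ

/-- `v` is a legitimate element of `V = V_t ∪ {⊥}` (for `some w`, `w` must be a
subtree of `t`). -/
def InV {Δ : Type} (t : RTree Δ) : V Δ → Prop
  | none => True
  | some w => RTree.Subtree w t

/-- `rhoRel t t' v` holds iff `ρ(t') = v`, where `ρ(t') = t'` if `t'` is a
subtree of `t` and `ρ(t') = ⊥` otherwise (here `t'` ranges over trees over
`Δ ∪ Y`, and subtrees of `t` are compared via the embedding of `T_Δ`). -/
def rhoRel {Δ : Type} (t : RTree Δ) (t' : OT Δ) : V Δ → Prop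
  | some w => RTree.Subtree w t ∧ embed w = t'
  | none => ¬ ∃ w : RTree Δ, RTree.Subtree w t ∧ embed w = t'

/-- `ρ(T)` for a set `T` of output trees. -/
def rhoImg {Δ : Type} (t : RTree Δ) (T : Set (OT Δ)) : Set (V Δ) :=
  {v | ∃ t' ∈ T, rhoRel t t' v}

/-- The predicate `f_{v⃗,a⃗}(r, v')` of the inverse-type construction for
IO-mtts, for the fixed output tree `t`. -/
inductive FPred {Δ Q : Type} (t : RTree Δ) (vs : List (V Δ))
    (aenv : List (Set (Trip Δ Q))) : Rhs Δ Q → V Δ → Prop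
  | param {i : ℕ} {v : V Δ} (h : vs[i]? = some v) :
      FPred t vs aenv (.node (.param i) []) v
  | outSome {d : Δ} {rs : List (Rhs Δ Q)} {w : RTree Δ}
      (hw : RTree.Subtree w t) (hl : w.label = d)
      (h : ∀ i : Fin rs.length, FPred t vs aenv (rs.get i) w.children[i.val]?) :
      FPred t vs aenv (.node (.out d) rs) (some w)
  | outNone {d : Δ} {rs : List (Rhs Δ Q)} (us : List (V Δ))
      (hlen : us.length = rs.length)
      (hus : ∀ u ∈ us, InV t u)
      (h : ∀ i : Fin rs.length, FPred t vs aenv (rs.get i) (us.get (i.cast hlen.symm)))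
      (hno : ¬ ∃ w : RTree Δ, RTree.Subtree w t ∧ w.label = d ∧
          ∀ i : Fin rs.length, w.children[i.val]? = us.get (i.cast hlen.symm)) :
      FPred t vs aenv (.node (.out d) rs) none
  | call {q' : Q} {x : ℕ} {rs : List (Rhs Δ Q)} {v : V Δ} (us : List (V Δ))
      (hlen : us.length = rs.length)
      (ha : (q', us, v) ∈ aenv.getD x ∅)
      (h : ∀ i : Fin rs.length, FPred t vs aenv (rs.get i) (us.get (i.cast hlen.symm))) :
      FPred t vs aenv (.node (.call q' x) rs) v

/-- The run `run(s)` of the (on-the-fly constructed) inverse-type automaton of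
an IO-mtt on the input tree `s`, for the fixed output tree `t`:
`run(σ(s_1,…,s_k)) = {(q, v⃗, v') | ∃ r ∈ R_{q,σ}: f_{v⃗,(run(s_1),…,run(s_k))}(r, v')}`. -/
def runIO {Γ Δ Q : Type} (rankQ : Q → ℕ)
    (rsel : Q → Γ → List (RTree Γ) → Set (Rhs Δ Q)) (t : RTree Δ) :
    RTree Γ → Set (Trip Δ Q)
  | .node σ ss =>
      {trip | trip.2.1.length = rankQ trip.1 ∧ (∀ v ∈ trip.2.1, InV t v) ∧
        InV t trip.2.2 ∧
        ∃ r ∈ rsel trip.1 σ ss,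
          FPred t trip.2.1 (ss.attach.map (fun x => runIO rankQ rsel t x.1)) r trip.2.2}
decreasing_by
  have := List.sizeOf_lt_of_mem x.2
  simp only [RTree.node.sizeOf_spec]
  omega

end MttF

namespace MttF
section Helpers
open Classical

variable {Γ Δ Q : Type}

theorem RTree.map_node {α β : Type} (f : α → β) (a : α) (ts : List (RTree α)) :
    RTree.map f (RTree.node a ts) = RTree.node (f a) (ts.map (RTree.map f)) := by
  rw [RTree.map]; simp

theorem RTree.ind' {α : Type} {P : RTree α → Prop}
    (h : ∀ a ts, (∀ u ∈ ts, P u) → P (RTree.node a ts)) : ∀ u, P u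
  | .node a ts => h a ts (fun u hu => RTree.ind' h u)
decreasing_by
  have := List.sizeOf_lt_of_mem hu
  simp only [RTree.node.sizeOf_spec]
  omega

theorem embed_node (d : Δ) (ts : List (RTree Δ)) :
    embed (RTree.node d ts) = RTree.node (OLab.out d) (ts.map embed) := RTree.map_node ..

theorem embed_injective : Function.Injective (embed (Δ := Δ)) := by
  intro w
  induction w using RTree.ind' with
  | h a ts ih =>
    intro w' h'
    cases w' with
    | node a' ts' =>
      rw [embed_node, embed_node] at h'
      obtain ⟨h1, h2⟩ := RTree.node.inj h'
      cases OLab.out.inj h1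
      have hlen : ts.length = ts'.length := by
        simpa using congrArg List.length h2
      congr 1
      apply List.ext_getElem hlen
      intro i hi hi'
      have : embed ts[i] = embed ts'[i] := by
        have := congrArg (fun l => l[i]?) h2
        simpa [List.getElem?_eq_getElem, hi, hi', List.getElem?_map] using this
      exact ih _ (List.getElem_mem hi) this

theorem substY_param (ts : List (OT Δ)) (i : ℕ) (us : List (OT Δ)) :
    substY ts (.node (.param i) us) = ts.getD i (.node (.param i) []) := by rw [substY]

theorem substY_out (ts : List (OT Δ)) (d : Δ) (us : List (OT Δ)) :
    substY ts (.node (.out d) us) = .node (.out d) (us.map (substY ts)) := by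
  rw [substY]; simp

theorem substX_node (ss : List (RTree Γ)) (l : RLab Δ Q) (rs : List (Rhs Δ Q)) :
    substX ss (.node l rs) = .node (l.subst ss) (rs.map (substX ss)) := RTree.map_node ..

theorem RTree.Subtree.trans {α : Type} {u v w : RTree α}
    (h1 : RTree.Subtree u v) (h2 : RTree.Subtree v w) : RTree.Subtree u w := by
  induction h2 with
  | refl => exact h1
  | step hc _ ih => exact .step hc ih

theorem subtree_of_mem_children {α : Type} {c : RTree α} {a : α} {ts : List (RTree α)}
    (h : c ∈ ts) : RTree.Subtree c (RTree.node a ts) := .step h (.refl c)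

theorem RTree.Wf.of_subtree {α : Type} {rk : α → ℕ} {w t : RTree α}
    (h : RTree.Subtree w t) : t.Wf rk → w.Wf rk := by
  induction h with
  | refl => exact id
  | step hc hsub ih =>
    intro ht
    cases ht with
    | node hlen hall => exact ih (hall _ hc)

end Helpers
section Helpers2
open Classical

variable {Γ Δ Q : Type}

/-- The function version of `ρ`. -/
noncomputable def rho (t : RTree Δ) (t' : OT Δ) : V Δ :=
  if h : ∃ w, RTree.Subtree w t ∧ embed w = t' then some h.choose else none

theorem rhoRel_rho (t : RTree Δ) (t' : OT Δ) : rhoRel t t' (rho t t') := by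
  unfold rho
  split
  · next h => exact h.choose_spec
  · next h => exact h

theorem rhoRel_unique {t : RTree Δ} {t' : OT Δ} {v v' : V Δ}
    (h : rhoRel t t' v) (h' : rhoRel t t' v') : v = v' := by
  cases v with
  | some w =>
    cases v' with
    | some w' =>
      obtain ⟨_, hw⟩ := h
      obtain ⟨_, hw'⟩ := h'
      exact congrArg some (embed_injective (hw.trans hw'.symm))
    | none => exact absurd ⟨_, h.1, h.2⟩ h'
  | none =>
    cases v' with
    | some w' => exact absurd ⟨_, h'.1, h'.2⟩ h
    | none => rfl

theorem rho_eq {t : RTree Δ} {t' : OT Δ} {v : V Δ} (h : rhoRel t t' v) : rho t t' = v :=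
  rhoRel_unique (rhoRel_rho t t') h

theorem InV_of_rhoRel {t : RTree Δ} {t' : OT Δ} {v : V Δ} (h : rhoRel t t' v) : InV t v := by
  cases v with
  | some w => exact h.1
  | none => trivial

theorem InV_rho (t : RTree Δ) (t' : OT Δ) : InV t (rho t t') :=
  InV_of_rhoRel (rhoRel_rho t t')

/-- All parameter indices in an output tree are `< m` (and parameter nodes are leaves). -/
inductive OBound (m : ℕ) : OT Δ → Prop
  | out {d : Δ} {ts : List (OT Δ)} (h : ∀ u ∈ ts, OBound m u) :
      OBound m (.node (.out d) ts)
  | param {i : ℕ} (h : i < m) : OBound m (.node (.param i) [])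

/-- All parameter indices in an `ST` tree are `< m` (and parameter nodes are leaves). -/
inductive STBound (m : ℕ) : ST Γ Δ Q → Prop
  | out {d : Δ} {ts : List (ST Γ Δ Q)} (h : ∀ u ∈ ts, STBound m u) :
      STBound m (.node (.out d) ts)
  | call {q : Q} {s : RTree Γ} {ts : List (ST Γ Δ Q)} (h : ∀ u ∈ ts, STBound m u) :
      STBound m (.node (.call q s) ts)
  | param {i : ℕ} (h : i < m) : STBound m (.node (.param i) [])

theorem NoParam.stBound {u : ST Γ Δ Q} (h : NoParam u) (m : ℕ) : STBound m u := by
  induction h with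
  | @node l ts hl _ ih =>
    cases l with
    | out d => exact .out ih
    | call q s => exact .call ih
    | param i => exact absurd rfl (hl i)

theorem OBound.zero_embed {t' : OT Δ} (h : OBound 0 t') : ∃ w, embed w = t' := by
  induction h with
  | @out d ts _ ih =>
    have key : ∀ l : List (OT Δ), (∀ u ∈ l, ∃ w, embed w = u) →
        ∃ ws : List (RTree Δ), ws.map embed = l := by
      intro l
      induction l with
      | nil => exact fun _ => ⟨[], rfl⟩
      | cons a l ihl =>
        intro hh
        obtain ⟨ws, hws⟩ := ihl (fun u hu => hh u (List.mem_cons_of_mem _ hu))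
        obtain ⟨w, hw⟩ := hh a List.mem_cons_self
        exact ⟨w :: ws, by simp [hw, hws]⟩
    have : ∃ ws : List (RTree Δ), ws.map embed = ts := key ts ih
    obtain ⟨ws, hws⟩ := this
    exact ⟨.node d ws, by rw [embed_node, hws]⟩
  | param h => omega

theorem embed_OBound (m : ℕ) (w : RTree Δ) : OBound m (embed w) := by
  induction w using RTree.ind' with
  | h a ts ih =>
    rw [embed_node]
    exact .out (by simpa using ih)

theorem OBound.substY {m n : ℕ} {ts : List (OT Δ)} {u : OT Δ}
    (hu : OBound n u) (hn : n ≤ ts.length) (hts : ∀ x ∈ ts, OBound m x) :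
    OBound m (substY ts u) := by
  induction hu with
  | out _ ih =>
    rw [substY_out]
    exact .out (by simpa using ih)
  | param h =>
    rw [substY_param]
    have hlt : _ < ts.length := lt_of_lt_of_le h hn
    rw [List.getD_eq_getElem?_getD, List.getElem?_eq_getElem hlt]
    exact hts _ (List.getElem_mem hlt)

theorem substY_substY {ts ts₀ : List (OT Δ)} {u : OT Δ} (hu : OBound ts₀.length u) :
    substY ts (substY ts₀ u) = substY (ts₀.map (substY ts)) u := by
  induction hu with
  | out _ ih =>
    rw [substY_out, substY_out, substY_out, List.map_map]
    exact congrArg _ (List.map_congr_left (by simpa using ih))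
  | param h =>
    next i =>
    rw [substY_param, substY_param, List.getD_eq_getElem?_getD, List.getElem?_eq_getElem h,
      List.getD_eq_getElem?_getD, List.getElem?_eq_getElem (by simpa using h), List.getElem_map]
    simp

end Helpers2
section Helpers3
open Classical

variable {Γ Δ Q : Type}

theorem substX_wf_bound {M : MTT Γ Δ Q} {r : Rhs Δ Q} {ss : List (RTree Γ)} {m : ℕ}
    (hr : RhsWf M.rankΔ M.rankQ ss.length m r) (hss : ∀ s ∈ ss, RTree.Wf M.rankΓ s) :
    STWf M.rankΓ M.rankΔ M.rankQ (substX ss r) ∧ STBound m (substX ss r) := by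
  induction hr with
  | @out d ts hlen _ ih =>
    rw [substX_node]
    show STWf _ _ _ (.node (.out d) _) ∧ STBound m (.node (.out d) _)
    constructor
    · exact .out (by simpa using hlen) (by simpa using fun u hu => (ih u hu).1)
    · exact .out (by simpa using fun u hu => (ih u hu).2)
  | @call q' x ts hx hlen _ ih =>
    rw [substX_node]
    have hsome : ss[x]? = some ss[x] := List.getElem?_eq_getElem hx
    show STWf _ _ _ (.node ((RLab.call q' x).subst ss) _) ∧
         STBound m (.node ((RLab.call q' x).subst ss) _)
    rw [RLab.subst, hsome]
    constructor
    · exact .call (hss _ (List.getElem_mem hx)) (by simpa using hlen)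
        (by simpa using fun u hu => (ih u hu).1)
    · exact .call (by simpa using fun u hu => (ih u hu).2)
  | @param i hi =>
    rw [substX_node]
    show STWf _ _ _ (.node (.param i) _) ∧ STBound m (.node (.param i) _)
    simp only [List.map_nil]
    exact ⟨.param i, .param hi⟩

theorem semIO_bound {M : MTT Γ Δ Q} {u : ST Γ Δ Q} {t₀ : OT Δ} {m : ℕ}
    (h : SemIO M.sel u t₀) (hwf : STWf M.rankΓ M.rankΔ M.rankQ u) (hb : STBound m u) :
    OBound m t₀ := by
  induction h generalizing m with
  | param i =>
    cases hb with
    | param hi => exact .param hi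
  | @out d us ts hlen _ ih =>
    cases hwf with
    | out _ hwfc =>
      cases hb with
      | out hbc =>
        refine .out ?_
        intro x hx
        obtain ⟨i, hi, rfl⟩ := List.mem_iff_getElem.mp hx
        have hi' : i < us.length := by omega
        have := ih ⟨i, hi'⟩ (hwfc _ (List.getElem_mem hi')) (hbc _ (List.getElem_mem hi'))
        simpa using this
  | @call q' σ ss us r t₀' ts hrule h₀ hlen _ ih₀ ih =>
    cases hwf with
    | call hs hlenus hwfc =>
      cases hb with
      | call hbc =>
        -- `ts` has entries bounded by `m`
        have hts : ∀ x ∈ ts, OBound m x := by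
          intro x hx
          obtain ⟨i, hi, rfl⟩ := List.mem_iff_getElem.mp hx
          have hi' : i < us.length := by omega
          have := ih ⟨i, hi'⟩ (hwfc _ (List.getElem_mem hi')) (hbc _ (List.getElem_mem hi'))
          simpa using this
        -- rule is well-formed
        have hrw : RhsWf M.rankΔ M.rankQ ss.length (M.rankQ q') r := by
          have := M.rules_wf q' σ r hrule
          cases hs with
          | node hl _ => rwa [← hl] at this
        have hsswf : ∀ s ∈ ss, RTree.Wf M.rankΓ s := by
          cases hs with
          | node _ hws => exact hws
        obtain ⟨hwf', hb'⟩ := substX_wf_bound hrw hsswf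
        have hb₀ : OBound (M.rankQ q') t₀' := ih₀ hwf' hb'
        exact hb₀.substY (by omega) hts

theorem mem_runIO {rankQ : Q → ℕ} {rsel : Q → Γ → List (RTree Γ) → Set (Rhs Δ Q)}
    {t : RTree Δ} {q : Q} {vs : List (V Δ)} {v' : V Δ} {σ : Γ} {ss : List (RTree Γ)} :
    (q, vs, v') ∈ runIO rankQ rsel t (.node σ ss) ↔
      vs.length = rankQ q ∧ (∀ v ∈ vs, InV t v) ∧ InV t v' ∧
      ∃ r ∈ rsel q σ ss, FPred t vs (ss.map (runIO rankQ rsel t)) r v' := by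
  conv_lhs => rw [runIO]
  simp [Set.mem_setOf_eq]

theorem getD_map_run {f : RTree Γ → Set (Trip Δ Q)} {ss : List (RTree Γ)} {x : ℕ}
    (hx : x < ss.length) : (ss.map f).getD x ∅ = f ss[x] := by
  rw [List.getD_eq_getElem?_getD, List.getElem?_eq_getElem (by simpa using hx)]
  simp

end Helpers3
section LemA
open Classical

variable {Γ Δ Q : Type}

theorem lemA {M : MTT Γ Δ Q} {t : RTree Δ} (ht : t.Wf M.rankΔ)
    {u : ST Γ Δ Q} {t₀ : OT Δ} (h : SemIO M.sel u t₀) :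
    ∀ (ss : List (RTree Γ)) (r : Rhs Δ Q) (tsP : List (OT Δ)),
      u = substX ss r →
      (∀ s ∈ ss, s.Wf M.rankΓ) →
      RhsWf M.rankΔ M.rankQ ss.length tsP.length r →
      (∀ x ∈ tsP, OBound 0 x) →
      FPred t (tsP.map (rho t)) (ss.map (runIO M.rankQ M.sel t)) r
        (rho t (substY tsP t₀)) := by
  induction h with
  | param i =>
    intro ss r tsP hu hss hr htsP
    cases r with
    | node l rs =>
      rw [substX_node] at hu
      obtain ⟨h1, h2⟩ := RTree.node.inj hu
      cases l with
      | out d => simp [RLab.subst] at h1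
      | call q'' x =>
        cases hr with
        | call hx hlen hch =>
          have hsome : ss[x]? = some ss[x] := List.getElem?_eq_getElem hx
          simp only [RLab.subst, hsome] at h1
          simp at h1
      | param j =>
        simp only [RLab.subst] at h1
        cases h1
        cases hr with
        | param hi =>
          rw [substY_param, List.getD_eq_getElem?_getD, List.getElem?_eq_getElem hi,
            Option.getD_some]
          exact FPred.param (by simp [List.getElem?_eq_getElem, hi])
  | @out d us tsout hlen hsem ih =>
    intro ss r tsP hu hss hr htsP
    cases r with
    | node l rs =>
      rw [substX_node] at hu
      obtain ⟨h1, h2⟩ := RTree.node.inj hu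
      cases l with
      | param j => simp [RLab.subst] at h1
      | call q'' x =>
        cases hr with
        | call hx hlen' hch =>
          have hsome : ss[x]? = some ss[x] := List.getElem?_eq_getElem hx
          simp only [RLab.subst, hsome] at h1
          simp at h1
      | out d' =>
        simp only [RLab.subst] at h1
        cases h1
        subst h2
        cases hr with
        | out hlrs hch =>
          have hlu : tsout.length = rs.length := by simpa using hlen
          have key : ∀ (i : ℕ) (hi : i < rs.length),
              FPred t (tsP.map (rho t)) (ss.map (runIO M.rankQ M.sel t)) rs[i]
                (rho t (substY tsP (tsout[i]'(by omega)))) := by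
            intro i hi
            have hiu : i < (rs.map (substX ss)).length := by simpa using hi
            have := ih ⟨i, hiu⟩ ss rs[i] tsP
              (by simp [List.get_eq_getElem, List.getElem_map])
              hss (hch _ (List.getElem_mem hi)) htsP
            simpa using this
          rw [substY_out]
          rcases hEq : rho t (.node (OLab.out d) (tsout.map (substY tsP))) with _ | w
          · -- result is ⊥
            have hnone := rhoRel_rho t (.node (OLab.out d) (tsout.map (substY tsP)))
            rw [hEq] at hnone
            refine FPred.outNone (tsout.map (fun x => rho t (substY tsP x)))
              (by simpa using hlu) (by simp; intro x _; exact InV_rho t _) ?_ ?_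
            · intro i
              have hi : (i : ℕ) < rs.length := i.isLt
              have := key i hi
              simpa [List.get_eq_getElem] using this
            · rintro ⟨w, hsub, hlab, hch'⟩
              apply hnone
              cases w with
              | node a cs =>
                rw [RTree.label] at hlab
                subst hlab
                have hcl : cs.length = rs.length := by
                  have := RTree.Wf.of_subtree hsub ht
                  cases this with
                  | node hl _ => omega
                refine ⟨.node _ cs, hsub, ?_⟩
                rw [embed_node]
                congr 1
                apply List.ext_getElem (by simp; omega)
                intro i hi hi'
                have hic : i < cs.length := by simpa using hi
                have hit : i < tsout.length := by simpa using hi'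
                have hi2 : i < rs.length := by omega
                have := hch' ⟨i, hi2⟩
                rw [RTree.children, List.getElem?_eq_getElem hic] at this
                have hval : some (cs[i]'hic) = rho t (substY tsP (tsout[i]'hit)) := by
                  simpa [List.get_eq_getElem] using this
                have hrel2 := rhoRel_rho t (substY tsP (tsout[i]'hit))
                rw [← hval] at hrel2
                simp only [List.getElem_map]
                exact hrel2.2
          · -- result is a subtree w
            have hsome := rhoRel_rho t (.node (OLab.out d) (tsout.map (substY tsP)))
            rw [hEq] at hsome
            obtain ⟨hsub, hemb⟩ := hsome
            cases w with
            | node a cs =>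
              rw [embed_node] at hemb
              obtain ⟨ha, hce⟩ := RTree.node.inj hemb
              cases OLab.out.inj ha
              have hcl : cs.length = tsout.length := by
                simpa using congrArg List.length hce
              refine FPred.outSome hsub (by rw [RTree.label]) ?_
              intro i
              have hi : (i : ℕ) < rs.length := i.isLt
              have hic : (i : ℕ) < cs.length := by omega
              rw [RTree.children, List.getElem?_eq_getElem hic]
              have hval : rho t (substY tsP (tsout[(i : ℕ)]'(by omega))) =
                  some (cs[(i : ℕ)]'hic) := by
                apply rho_eq
                constructor
                · exact RTree.Subtree.trans
                    (subtree_of_mem_children (List.getElem_mem hic)) hsub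
                · have := congrArg (fun l => l[(i : ℕ)]?) hce
                  simp only [List.getElem?_map, List.getElem?_eq_getElem hic,
                    List.getElem?_eq_getElem (show (i : ℕ) < tsout.length by omega),
                    Option.map_some] at this
                  exact Option.some.inj this
              have := key i hi
              rw [hval] at this
              simpa [List.get_eq_getElem] using this
  | @call q' σ ss' us r' t₀' tsout hrule h₀ hlen hsem ih₀ ih =>
    intro ss r tsP hu hss hr htsP
    cases r with
    | node l rs =>
      rw [substX_node] at hu
      obtain ⟨h1, h2⟩ := RTree.node.inj hu
      cases l with
      | param j => simp [RLab.subst] at h1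
      | out d => simp [RLab.subst] at h1
      | call q'' x =>
        cases hr with
        | call hx hlrs hch =>
          have hsome : ss[x]? = some ss[x] := List.getElem?_eq_getElem hx
          simp only [RLab.subst, hsome] at h1
          obtain ⟨hq, hxeq⟩ := SLab.call.inj h1
          subst hq
          subst h2
          have hwsx : RTree.Wf M.rankΓ (RTree.node σ ss') := by
            rw [hxeq]; exact hss _ (List.getElem_mem hx)
          have hlss' : ss'.length = M.rankΓ σ := by cases hwsx with | node hl _ => exact hl
          have hss' : ∀ s ∈ ss', s.Wf M.rankΓ := by cases hwsx with | node _ hws => exact hws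
          have hlu : tsout.length = rs.length := by simpa using hlen
          -- the rule r' is a member of M.rules q' σ
          have hrw' : RhsWf M.rankΔ M.rankQ ss'.length (M.rankQ q') r' := by
            have := M.rules_wf q' σ r' hrule
            rwa [← hlss'] at this
          -- bound on the outputs for the arguments
          have hbout : ∀ (i : ℕ) (hi : i < tsout.length), OBound tsP.length (tsout[i]'hi) := by
            intro i hi
            have hiu : i < (rs.map (substX ss)).length := by simpa using (by omega : i < rs.length)
            have hwb := substX_wf_bound (M := M)
              (hch _ (List.getElem_mem (show i < rs.length by omega))) hss
            have := semIO_bound (M := M) (m := tsP.length) (hsem ⟨i, hiu⟩) ?_ ?_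
            · simpa [List.get_eq_getElem] using this
            · simpa [List.get_eq_getElem, List.getElem_map] using hwb.1
            · simpa [List.get_eq_getElem, List.getElem_map] using hwb.2
          set ts' := tsout.map (substY tsP) with hts'
          have hts'0 : ∀ x ∈ ts', OBound 0 x := by
            intro x hxm
            rw [hts', List.mem_map] at hxm
            obtain ⟨a, ha, rfl⟩ := hxm
            obtain ⟨i, hi, rfl⟩ := List.mem_iff_getElem.mp ha
            exact (hbout i hi).substY (le_refl _) htsP
          -- bound on t₀'
          have hb₀ : OBound tsout.length t₀' := by
            have hwb := substX_wf_bound (M := M) hrw' hss'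
            have := semIO_bound (M := M) h₀ hwb.1 hwb.2
            rwa [show M.rankQ q' = tsout.length by omega] at this
          have hcomp : substY tsP (substY tsout t₀') = substY ts' t₀' :=
            substY_substY hb₀
          have ihA := ih₀ ss' r' ts' rfl hss'
            (by rwa [show ts'.length = M.rankQ q' by simp [hts']; omega]) hts'0
          have key : ∀ (i : ℕ) (hi : i < rs.length),
              FPred t (tsP.map (rho t)) (ss.map (runIO M.rankQ M.sel t)) rs[i]
                (rho t (substY tsP (tsout[i]'(by omega)))) := by
            intro i hi
            have hiu : i < (rs.map (substX ss)).length := by simpa using hi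
            have := ih ⟨i, hiu⟩ ss rs[i] tsP
              (by simp [List.get_eq_getElem, List.getElem_map])
              hss (hch _ (List.getElem_mem hi)) htsP
            simpa using this
          refine FPred.call (ts'.map (rho t)) (by simp [hts']; omega) ?_ ?_
          · rw [getD_map_run hx, ← hxeq]
            refine mem_runIO.mpr ⟨by simp [hts']; omega, ?_, InV_rho t _, r', hrule, ?_⟩
            · simp only [List.mem_map, forall_exists_index, and_imp]
              rintro v x' - rfl
              exact InV_rho t _
            · rw [hcomp]
              exact ihA
          · intro i
            have hi : (i : ℕ) < rs.length := i.isLt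
            have := key i hi
            simpa [List.get_eq_getElem, hts'] using this

end LemA
section LemC
open Classical

variable {Γ Δ Q : Type}

theorem lemC {M : MTT Γ Δ Q} {t : RTree Δ} (ht : t.Wf M.rankΔ) :
    ∀ n : ℕ, ∀ (ss : List (RTree Γ)),
      (∀ s ∈ ss, sizeOf s < n) →
      (∀ s ∈ ss, s.Wf M.rankΓ) →
      ∀ (r : Rhs Δ Q) (tsP : List (OT Δ)) (v' : V Δ),
        FPred t (tsP.map (rho t)) (ss.map (runIO M.rankQ M.sel t)) r v' →
        RhsWf M.rankΔ M.rankQ ss.length tsP.length r →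
        (∀ x ∈ tsP, OBound 0 x) →
        ∃ t₀, SemIO M.sel (substX ss r) t₀ ∧ rhoRel t (substY tsP t₀) v' := by
  intro n
  induction n using Nat.strong_induction_on with
  | _ n ihn =>
  intro ss hsz hwf r tsP v' hf
  induction hf with
  | @param i v h =>
    intro hr htsP
    cases hr with
    | param hi =>
      refine ⟨.node (.param i) [], ?_, ?_⟩
      · rw [substX_node]
        simp only [List.map_nil]
        exact SemIO.param i
      · rw [substY_param, List.getD_eq_getElem?_getD, List.getElem?_eq_getElem hi,
          Option.getD_some]
        have : v = rho t tsP[i] := by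
          rw [List.getElem?_map, List.getElem?_eq_getElem hi, Option.map_some] at h
          exact (Option.some.inj h).symm
        rw [this]
        exact rhoRel_rho t _
  | @outSome d rs' w hw hl hpred ih =>
    intro hr htsP
    cases hr with
    | out hlrs hch =>
      cases w with
      | node a cs =>
        rw [RTree.label] at hl
        subst hl
        have hcl : cs.length = rs'.length := by
          have := RTree.Wf.of_subtree hw ht
          cases this with
          | node hc _ => omega
        have choice : ∀ i : Fin rs'.length,
            ∃ t₀, SemIO M.sel (substX ss (rs'.get i)) t₀ ∧
              rhoRel t (substY tsP t₀) ((RTree.node a cs).children[(i : ℕ)]?) :=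
          fun i => ih i (hch _ (by simp [List.get_eq_getElem, List.getElem_mem])) htsP
        refine ⟨.node (.out a) (List.ofFn (fun i => (choice i).choose)), ?_, ?_⟩
        · rw [substX_node]
          refine SemIO.out (by simp) ?_
          intro i
          have hi : (i : ℕ) < rs'.length := by simpa using i.isLt
          have := (choice ⟨i, hi⟩).choose_spec.1
          simpa [List.get_eq_getElem, List.getElem_map, List.getElem_ofFn] using this
        · rw [substY_out]
          refine ⟨hw, ?_⟩
          rw [embed_node]
          congr 1
          apply List.ext_getElem (by simp; omega)
          intro i hi hi'
          have hic : i < cs.length := by simpa using hi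
          have hirs : i < rs'.length := by omega
          have hspec : rhoRel t (substY tsP ((choice ⟨i, hirs⟩).choose)) (cs[i]?) :=
            (choice ⟨i, hirs⟩).choose_spec.2
          rw [List.getElem?_eq_getElem hic] at hspec
          simp only [List.getElem_map, List.getElem_ofFn]
          exact hspec.2
  | @outNone d rs' us hlenus hus hpred hno ih =>
    intro hr htsP
    cases hr with
    | out hlrs hch =>
      have choice : ∀ i : Fin rs'.length,
          ∃ t₀, SemIO M.sel (substX ss (rs'.get i)) t₀ ∧
            rhoRel t (substY tsP t₀) (us.get (i.cast hlenus.symm)) :=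
        fun i => ih i (hch _ (by simp [List.get_eq_getElem, List.getElem_mem])) htsP
      refine ⟨.node (.out d) (List.ofFn (fun i => (choice i).choose)), ?_, ?_⟩
      · rw [substX_node]
        refine SemIO.out (by simp) ?_
        intro i
        have hi : (i : ℕ) < rs'.length := by simpa using i.isLt
        have := (choice ⟨i, hi⟩).choose_spec.1
        simpa [List.get_eq_getElem, List.getElem_map, List.getElem_ofFn] using this
      · rw [substY_out]
        rintro ⟨w, hsub, hemb⟩
        cases w with
        | node a cs =>
          rw [embed_node] at hemb
          obtain ⟨ha, hce⟩ := RTree.node.inj hemb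
          cases OLab.out.inj ha
          have hcl : cs.length = rs'.length := by
            have := congrArg List.length hce
            simpa using this
          apply hno
          refine ⟨.node d cs, hsub, by rw [RTree.label], ?_⟩
          intro i
          have hic : (i : ℕ) < cs.length := by omega
          rw [RTree.children, List.getElem?_eq_getElem hic]
          have hspec := (choice ⟨i, i.isLt⟩).choose_spec.2
          have hembi : embed (cs[(i : ℕ)]'hic) =
              substY tsP ((choice ⟨i, i.isLt⟩).choose) := by
            have := congrArg (fun l => l[(i : ℕ)]?) hce
            simp only [List.getElem?_map, List.getElem?_eq_getElem hic,
              List.getElem?_eq_getElem (show (i : ℕ) < (List.ofFn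
                (fun i => (choice i).choose)).length by simpa using i.isLt),
              Option.map_some, List.getElem_ofFn] at this
            simpa using Option.some.inj this
          have : rhoRel t (substY tsP ((choice ⟨i, i.isLt⟩).choose)) (some (cs[(i : ℕ)]'hic)) := by
            refine ⟨?_, hembi⟩
            exact RTree.Subtree.trans (subtree_of_mem_children (List.getElem_mem hic)) hsub
          have := rhoRel_unique this hspec
          exact this
  | @call q'' x rs' v₀ us hlenus ha hpred ih =>
    intro hr htsP
    cases hr with
    | call hx hlrs hch =>
      rw [getD_map_run hx] at ha
      rcases hsxeq : ss[x] with ⟨σ'', ss''⟩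
      rw [hsxeq] at ha
      obtain ⟨hulen, hInV, hvInV, r'', hr''mem, hf''⟩ := mem_runIO.mp ha
      have choice : ∀ i : Fin rs'.length,
          ∃ t₀, SemIO M.sel (substX ss (rs'.get i)) t₀ ∧
            rhoRel t (substY tsP t₀) (us.get (i.cast hlenus.symm)) :=
        fun i => ih i (hch _ (by simp [List.get_eq_getElem, List.getElem_mem])) htsP
      set t₀s := List.ofFn (fun i => (choice i).choose) with ht₀s
      set ts' := t₀s.map (substY tsP) with hts'
      -- facts about the input subtree
      have hmem : ss[x] ∈ ss := List.getElem_mem hx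
      have hwsx : RTree.Wf M.rankΓ (RTree.node σ'' ss'') := hsxeq ▸ hwf _ hmem
      have hlss'' : ss''.length = M.rankΓ σ'' := by cases hwsx with | node hl _ => exact hl
      have hss'' : ∀ s ∈ ss'', s.Wf M.rankΓ := by cases hwsx with | node _ hws => exact hws
      have hszx : sizeOf (RTree.node σ'' ss'') < n := hsxeq ▸ hsz _ hmem
      have hsz'' : ∀ s ∈ ss'', sizeOf s < sizeOf (RTree.node σ'' ss'') := by
        intro s hsm
        have := List.sizeOf_lt_of_mem hsm
        simp only [RTree.node.sizeOf_spec]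
        omega
      -- us is the image of ts' under rho
      have hus_eq : us = ts'.map (rho t) := by
        apply List.ext_getElem (by simp [hts', ht₀s]; omega)
        intro i hi hi'
        have hirs : i < rs'.length := by omega
        have hspec := (choice ⟨i, hirs⟩).choose_spec.2
        have h1 : (ts'.map (rho t))[i]'hi' = rho t (substY tsP ((choice ⟨i, hirs⟩).choose)) := by
          simp only [hts', ht₀s, List.getElem_map, List.getElem_ofFn]
        rw [h1, rho_eq hspec]
        simp [List.get_eq_getElem]
      rw [hus_eq] at hf''
      -- bounds
      have hbt₀s : ∀ (i : ℕ) (hi : i < t₀s.length), OBound tsP.length (t₀s[i]'hi) := by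
        intro i hi
        have hirs : i < rs'.length := by simpa [ht₀s] using hi
        have hwb := substX_wf_bound (M := M) (hch _ (List.getElem_mem hirs)) hwf
        have := semIO_bound (M := M) (m := tsP.length) (choice ⟨i, hirs⟩).choose_spec.1
          (by simpa [List.get_eq_getElem] using hwb.1)
          (by simpa [List.get_eq_getElem] using hwb.2)
        simpa [ht₀s, List.getElem_ofFn] using this
      have hts'0 : ∀ y ∈ ts', OBound 0 y := by
        intro y hy
        rw [hts', List.mem_map] at hy
        obtain ⟨a, haa, rfl⟩ := hy
        obtain ⟨i, hi, rfl⟩ := List.mem_iff_getElem.mp haa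
        exact (hbt₀s i hi).substY (le_refl _) htsP
      have hlt₀s : t₀s.length = M.rankQ q'' := by simp [ht₀s]; omega
      -- recursive use of the main induction (smaller input trees)
      have hrw'' : RhsWf M.rankΔ M.rankQ ss''.length ts'.length r'' := by
        have := M.rules_wf q'' σ'' r'' hr''mem
        rwa [← hlss'', show M.rankQ q'' = ts'.length by simp [hts']; omega] at this
      obtain ⟨t₀', hsem', hrel'⟩ := ihn _ hszx ss'' hsz'' hss'' r'' ts' v₀ hf'' hrw'' hts'0
      -- assemble
      have hb₀' : OBound t₀s.length t₀' := by
        have hrw2 : RhsWf M.rankΔ M.rankQ ss''.length (M.rankQ q'') r'' := by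
          have := M.rules_wf q'' σ'' r'' hr''mem
          rwa [← hlss''] at this
        have hwb := substX_wf_bound (M := M) hrw2 hss''
        have := semIO_bound (M := M) (m := M.rankQ q'') hsem' hwb.1 hwb.2
        rwa [← hlt₀s] at this
      refine ⟨substY t₀s t₀', ?_, ?_⟩
      · rw [substX_node]
        have hsome : ss[x]? = some ss[x] := List.getElem?_eq_getElem hx
        simp only [RLab.subst, hsome, hsxeq]
        refine SemIO.call hr''mem hsem' (by simp [ht₀s]) ?_
        intro i
        have hi : (i : ℕ) < rs'.length := by simpa using i.isLt
        have := (choice ⟨i, hi⟩).choose_spec.1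
        simpa [ht₀s, List.get_eq_getElem, List.getElem_map, List.getElem_ofFn] using this
      · rw [substY_substY hb₀']
        exact hrel'
end LemC


/-- the correctness claim for the inverse-type construction for
IO-mtts.  For every input tree `s'`, state `q` of rank `n`, and parameter-free
trees `r_1,…,r_n` over `Δ ∪ (Q × T_Σ)`:
`ρ(⟦⟨q,s'⟩(r_1,…,r_n)⟧_IO) = { v' | ∃ v⃗, (q,v⃗,v') ∈ run(s') ∧ v_i ∈ ρ(⟦r_i⟧_IO) }`. -/
theorem runIO_claim {Γ Δ Q : Type} [Fintype Γ] [Fintype Δ] [Fintype Q]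
    (M : MTT Γ Δ Q) (t : RTree Δ) (ht : t.Wf M.rankΔ)
    (s' : RTree Γ) (hs : s'.Wf M.rankΓ)
    (q : Q) (rs : List (ST Γ Δ Q)) (hlen : rs.length = M.rankQ q)
    (hrs : ∀ r ∈ rs, STWf M.rankΓ M.rankΔ M.rankQ r ∧ NoParam r) :
    rhoImg t {t' | SemIO M.sel (.node (.call q s') rs) t'} =
      {v' | ∃ vs : List (V Δ),
        (q, vs, v') ∈ runIO M.rankQ M.sel t s' ∧
        List.Forall₂ (fun r v => v ∈ rhoImg t {w | SemIO M.sel r w}) rs vs} := by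
  obtain ⟨σ, ss⟩ := s'
  have hssl : ss.length = M.rankΓ σ := by cases hs with | node hl _ => exact hl
  have hsswf : ∀ s ∈ ss, s.Wf M.rankΓ := by cases hs with | node _ h => exact h
  ext v'
  simp only [Set.mem_setOf_eq]
  constructor
  · rintro ⟨t', ht', hrel⟩
    simp only [Set.mem_setOf_eq] at ht'
    cases ht' with
    | @call _ _ _ _ r t₀ tsw hrule h₀ hlenw hsemw =>
      have htw0 : ∀ x ∈ tsw, OBound 0 x := by
        intro x hx
        obtain ⟨i, hi, rfl⟩ := List.mem_iff_getElem.mp hx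
        have hi' : i < rs.length := by omega
        have := semIO_bound (M := M) (m := 0) (hsemw ⟨i, hi'⟩)
          (by simpa [List.get_eq_getElem] using (hrs _ (List.getElem_mem hi')).1)
          (by simpa [List.get_eq_getElem] using ((hrs _ (List.getElem_mem hi')).2).stBound 0)
        simpa [List.get_eq_getElem] using this
      have hveq : v' = rho t (substY tsw t₀) := (rho_eq hrel).symm
      refine ⟨tsw.map (rho t), ?_, ?_⟩
      · refine mem_runIO.mpr ⟨by simp; omega, ?_, ?_, r, hrule, ?_⟩
        · simp only [List.mem_map, forall_exists_index, and_imp]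
          rintro v x - rfl
          exact InV_rho t _
        · rw [hveq]; exact InV_rho t _
        · have hrw : RhsWf M.rankΔ M.rankQ ss.length tsw.length r := by
            have := M.rules_wf q σ r hrule
            rwa [← hssl, show M.rankQ q = tsw.length by omega] at this
          have := lemA ht h₀ ss r tsw rfl hsswf hrw htw0
          rwa [← hveq] at this
      · refine List.forall₂_iff_get.mpr ⟨by simp; omega, ?_⟩
        intro i h1 h2
        refine ⟨tsw[i]'(by omega), ?_, ?_⟩
        · have := hsemw ⟨i, h1⟩
          simpa [List.get_eq_getElem] using this
        · have : (List.map (rho t) tsw).get ⟨i, h2⟩ = rho t (tsw[i]'(by omega)) := by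
            simp [List.get_eq_getElem]
          rw [this]
          exact rhoRel_rho t _
  · rintro ⟨vs, hrun, hfa⟩
    obtain ⟨hvslen, hInV, hvInV, r, hrmem, hf⟩ := mem_runIO.mp hrun
    obtain ⟨hlfa, hget⟩ := List.forall₂_iff_get.mp hfa
    have choice : ∀ i : Fin rs.length,
        ∃ w, SemIO M.sel (rs.get i) w ∧ rhoRel t w (vs.get ⟨i, by omega⟩) := by
      intro i
      have := hget i i.isLt (by omega)
      obtain ⟨w, hw, hrel⟩ := this
      exact ⟨w, hw, hrel⟩
    set tsw := List.ofFn (fun i => (choice i).choose) with htsw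
    have hvs_eq : vs = tsw.map (rho t) := by
      apply List.ext_getElem (by simp [htsw]; omega)
      intro i hi hi'
      have hirs : i < rs.length := by omega
      have hspec := (choice ⟨i, hirs⟩).choose_spec.2
      have h1 : (tsw.map (rho t))[i]'hi' = rho t ((choice ⟨i, hirs⟩).choose) := by
        simp only [htsw, List.getElem_map, List.getElem_ofFn]
      rw [h1, rho_eq hspec]
      simp [List.get_eq_getElem]
    rw [hvs_eq] at hf
    have htw0 : ∀ x ∈ tsw, OBound 0 x := by
      intro x hx
      obtain ⟨i, hi, rfl⟩ := List.mem_iff_getElem.mp hx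
      have hirs : i < rs.length := by simpa [htsw] using hi
      have hxev : tsw[i]'hi = (choice ⟨i, hirs⟩).choose := by
        simp only [htsw, List.getElem_ofFn]
      rw [hxev]
      exact semIO_bound (M := M) (m := 0) (choice ⟨i, hirs⟩).choose_spec.1
        (by simpa [List.get_eq_getElem] using (hrs _ (List.getElem_mem hirs)).1)
        (by simpa [List.get_eq_getElem] using ((hrs _ (List.getElem_mem hirs)).2).stBound 0)
    have hrw : RhsWf M.rankΔ M.rankQ ss.length tsw.length r := by
      have := M.rules_wf q σ r hrmem
      rwa [← hssl, show M.rankQ q = tsw.length by simp [htsw]; omega] at this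
    obtain ⟨t₀, hsem0, hrel0⟩ := lemC ht (sizeOf (RTree.node σ ss)) ss
      (by
        intro s hsm
        have := List.sizeOf_lt_of_mem hsm
        simp only [RTree.node.sizeOf_spec]
        omega) hsswf r tsw v' hf hrw htw0
    refine ⟨substY tsw t₀, ?_, hrel0⟩
    simp only [Set.mem_setOf_eq]
    refine SemIO.call hrmem hsem0 (by simp [htsw]) ?_
    intro i
    have hi : (i : ℕ) < rs.length := i.isLt
    have := (choice ⟨i, hi⟩).choose_spec.1
    simpa [htsw, List.get_eq_getElem, List.getElem_ofFn] using this

end MttF
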